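/- The mirror-twisted N=2 Neveu-Schwarz algebra is not isomorphic (as a Lie superalgebra) to the N=2 Neveu-Schwarz algebra. -/
import Mathlib


/- STATEMENT 4: The mirror-twisted N=2 Neveu-Schwarz algebra is not isomorphic
(as a Lie superalgebra) to the N=2 Neveu-Schwarz algebra.  Both algebras are
modeled by their structure constants on bases (half-integer indices r = a+1/2
encoded by a ∈ ℤ).  An isomorphism would be a ℂ-linear equivalence commuting
with the (bilinearly extended) brackets and preserving the ℤ/2-grading; the
theorem asserts no such equivalence exists. -/

namespace Stmt4

namespace NS
inductive B : Type
  | d : B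
  | L : ℤ → B
  | J : ℤ → B
  | G1 : ℤ → B
  | G2 : ℤ → B
deriving DecidableEq

open B Complex

/-- Bilinear extension of a bracket given on basis elements. -/
noncomputable def extBr (br : B → B → (B →₀ ℂ)) (f g : B →₀ ℂ) : B →₀ ℂ :=
  f.sum fun a ca => g.sum fun b cb => (ca * cb) • br a b

/-- Structure constants of the N=2 Neveu-Schwarz algebra
(`G1 a` is `G⁽¹⁾_{a+1/2}`, `G2 a` is `G⁽²⁾_{a+1/2}`). -/
noncomputable def br : B → B → (B →₀ ℂ)
  | L m, L n =>
      Finsupp.single (L (m + n)) ((m : ℂ) - (n : ℂ))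
        + Finsupp.single d ((1/12 : ℂ) * ((m : ℂ)^3 - (m : ℂ)) *
            (if m + n = 0 then 1 else 0))
  | L m, J n => Finsupp.single (J (m + n)) (-(n : ℂ))
  | J n, L m => Finsupp.single (J (m + n)) ((n : ℂ))
  | J m, J n => Finsupp.single d ((1/3 : ℂ) * (m : ℂ) * (if m + n = 0 then 1 else 0))
  | L m, G1 a => Finsupp.single (G1 (m + a)) ((m : ℂ)/2 - ((a : ℂ) + 1/2))
  | G1 a, L m => Finsupp.single (G1 (m + a)) (-((m : ℂ)/2 - ((a : ℂ) + 1/2)))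
  | L m, G2 a => Finsupp.single (G2 (m + a)) ((m : ℂ)/2 - ((a : ℂ) + 1/2))
  | G2 a, L m => Finsupp.single (G2 (m + a)) (-((m : ℂ)/2 - ((a : ℂ) + 1/2)))
  | J m, G1 a => Finsupp.single (G2 (m + a)) (-Complex.I)
  | G1 a, J m => Finsupp.single (G2 (m + a)) (Complex.I)
  | J m, G2 a => Finsupp.single (G1 (m + a)) (Complex.I)
  | G2 a, J m => Finsupp.single (G1 (m + a)) (-Complex.I)
  | G1 a, G1 b =>
      Finsupp.single (L (a + b + 1)) (2 : ℂ)
        + Finsupp.single d ((1/3 : ℂ) * (((a : ℂ) + 1/2)^2 - 1/4) *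
            (if a + b + 1 = 0 then 1 else 0))
  | G2 a, G2 b =>
      Finsupp.single (L (a + b + 1)) (2 : ℂ)
        + Finsupp.single d ((1/3 : ℂ) * (((a : ℂ) + 1/2)^2 - 1/4) *
            (if a + b + 1 = 0 then 1 else 0))
  | G1 a, G2 b => Finsupp.single (J (a + b + 1)) (Complex.I * ((b : ℂ) - (a : ℂ)))
  | G2 a, G1 b => Finsupp.single (J (a + b + 1)) (Complex.I * ((a : ℂ) - (b : ℂ)))
  | _, _ => 0


/-- Parity of basis elements. -/
def par : B → ℕ
  | d => 0
  | L _ => 0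
  | J _ => 0
  | G1 _ => 1
  | G2 _ => 1

end NS

namespace Mir
inductive B : Type
  | d : B
  | L : ℤ → B
  | J : ℤ → B
  | G1 : ℤ → B
  | G2 : ℤ → B
deriving DecidableEq

open B

/-- Bilinear extension of a bracket given on basis elements. -/
noncomputable def extBr (br : B → B → (B →₀ ℂ)) (f g : B →₀ ℂ) : B →₀ ℂ :=
  f.sum fun a ca => g.sum fun b cb => (ca * cb) • br a b

/-- Parity of basis elements. -/
def par : B → ℕ
  | d => 0
  | L _ => 0
  | J _ => 0
  | G1 _ => 1
  | G2 _ => 1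

/-- Structure constants of the mirror-twisted N=2 Neveu-Schwarz algebra
(`J a` is `J_{a+1/2}`, `G1 a` is `G⁽¹⁾_{a+1/2}`, `G2 n` has n ∈ ℤ). -/
noncomputable def br : B → B → (B →₀ ℂ)
  | L m, L n =>
      Finsupp.single (L (m + n)) ((m : ℂ) - (n : ℂ))
        + Finsupp.single d ((1/12 : ℂ) * ((m : ℂ)^3 - (m : ℂ)) *
            (if m + n = 0 then 1 else 0))
  | L n, J a => Finsupp.single (J (n + a)) (-((a : ℂ) + 1/2))
  | J a, L n => Finsupp.single (J (n + a)) ((a : ℂ) + 1/2)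
  | J a, J b =>
      Finsupp.single d ((1/3 : ℂ) * ((a : ℂ) + 1/2) * (if a + b + 1 = 0 then 1 else 0))
  | L m, G1 a => Finsupp.single (G1 (m + a)) ((m : ℂ)/2 - ((a : ℂ) + 1/2))
  | G1 a, L m => Finsupp.single (G1 (m + a)) (-((m : ℂ)/2 - ((a : ℂ) + 1/2)))
  | L m, G2 n => Finsupp.single (G2 (m + n)) ((m : ℂ)/2 - (n : ℂ))
  | G2 n, L m => Finsupp.single (G2 (m + n)) (-((m : ℂ)/2 - (n : ℂ)))
  | G1 a, G1 b =>
      Finsupp.single (L (a + b + 1)) (2 : ℂ)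
        + Finsupp.single d ((1/3 : ℂ) * (((a : ℂ) + 1/2)^2 - 1/4) *
            (if a + b + 1 = 0 then 1 else 0))
  | G2 m, G2 n =>
      Finsupp.single (L (m + n)) (2 : ℂ)
        + Finsupp.single d ((1/3 : ℂ) * ((m : ℂ)^2 - 1/4) *
            (if m + n = 0 then 1 else 0))
  | G1 a, G2 n => Finsupp.single (J (a + n)) (-Complex.I * (((a : ℂ) + 1/2) - (n : ℂ)))
  | G2 n, G1 a => Finsupp.single (J (a + n)) (-Complex.I * (((a : ℂ) + 1/2) - (n : ℂ)))
  | J a, G1 b => Finsupp.single (G2 (a + b + 1)) (-Complex.I)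
  | G1 b, J a => Finsupp.single (G2 (a + b + 1)) (Complex.I)
  | J a, G2 n => Finsupp.single (G1 (a + n)) (Complex.I)
  | G2 n, J a => Finsupp.single (G1 (a + n)) (-Complex.I)
  | _, _ => 0


end Mir

open Finsupp

/-! ### Auxiliary lemmas -/

/-- Weight of odd basis elements of the mirror algebra: `G1 r` (which is
`G⁽¹⁾_{r+1/2}`) gets twice its half-integer index `2r+1`, `G2 n` gets `2n`. -/
def w : Mir.B → ℤ
  | Mir.B.G1 r => 2*r+1
  | Mir.B.G2 n => 2*n
  | _ => 0

lemma w_inj_odd (a b : Mir.B) (ha : Mir.par a = 1) (hb : Mir.par b = 1)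
    (h : w a = w b) : a = b := by
  cases a <;> cases b <;> simp_all [Mir.par, w] <;> omega

lemma mir_br_L_apply (a b : Mir.B) (ha : Mir.par a = 1) (hb : Mir.par b = 1) (k : ℤ)
    (h : Mir.br a b (Mir.B.L k) ≠ 0) : w a + w b = 2*k := by
  cases a <;> cases b <;>
    simp_all [Mir.par, Mir.br, w, Finsupp.single_apply, Finsupp.add_apply] <;> omega

lemma mir_br_L_self (a : Mir.B) (ha : Mir.par a = 1) (k : ℤ) (hk : 2*k = w a + w a) :
    Mir.br a a (Mir.B.L k) = 2 := by
  cases a <;> simp_all [Mir.par, Mir.br, w, Finsupp.single_apply, Finsupp.add_apply] <;>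
    omega

lemma mir_extBr_apply (br : Mir.B → Mir.B → (Mir.B →₀ ℂ)) (f g : Mir.B →₀ ℂ) (c : Mir.B) :
    Mir.extBr br f g c =
      ∑ a ∈ f.support, ∑ b ∈ g.support, (f a * g b) * (br a b c) := by
  rw [Mir.extBr, Finsupp.sum_apply, Finsupp.sum]
  refine Finset.sum_congr rfl fun a _ => ?_
  rw [Finsupp.sum_apply, Finsupp.sum]
  refine Finset.sum_congr rfl fun b _ => ?_
  simp [smul_eq_mul]

/-- In the mirror-twisted algebra, no nonzero odd element squares to zero. -/
lemma mir_no_square_zero (y : Mir.B →₀ ℂ)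
    (hodd : ∀ x ∈ y.support, Mir.par x = 1)
    (h : Mir.extBr Mir.br y y = 0) : y = 0 := by
  by_contra hy
  have hne : y.support.Nonempty := Finsupp.support_nonempty_iff.mpr hy
  have hne' : (y.support.image w).Nonempty := hne.image w
  set K := (y.support.image w).max' hne' with hK
  obtain ⟨x0, hx0S, hx0w⟩ := Finset.mem_image.mp ((y.support.image w).max'_mem hne')
  have hle : ∀ a ∈ y.support, w a ≤ K := fun a ha =>
    Finset.le_max' _ _ (Finset.mem_image_of_mem w ha)
  have huniq : ∀ a ∈ y.support, w a = K → a = x0 := fun a ha hw =>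
    w_inj_odd a x0 (hodd a ha) (hodd x0 hx0S) (by rw [hw, hx0w])
  -- no coefficient `2K` works unless K even; use L-index k with 2k = 2K, i.e. need K itself:
  -- evaluate the bracket at `L K`? We need 2k = w a + w b = 2K, so k = K.
  have h0 : Mir.extBr Mir.br y y (Mir.B.L K) = 0 := by rw [h]; rfl
  rw [mir_extBr_apply] at h0
  have hzero : ∀ a ∈ y.support, ∀ b ∈ y.support, ¬(a = x0 ∧ b = x0) →
      Mir.br a b (Mir.B.L K) = 0 := by
    intro a ha b hb hab
    by_contra hbr
    have hsum := mir_br_L_apply a b (hodd a ha) (hodd b hb) K hbr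
    have hwa : w a = K := by have := hle a ha; have := hle b hb; omega
    have hwb : w b = K := by have := hle a ha; have := hle b hb; omega
    exact hab ⟨huniq a ha hwa, huniq b hb hwb⟩
  have houter : ∑ a ∈ y.support, ∑ b ∈ y.support, (y a * y b) * (Mir.br a b (Mir.B.L K))
      = (y x0 * y x0) * (Mir.br x0 x0 (Mir.B.L K)) := by
    rw [Finset.sum_eq_single_of_mem x0 hx0S]
    · rw [Finset.sum_eq_single_of_mem x0 hx0S]
      intro b hb hbne
      rw [hzero x0 hx0S b hb (by tauto)]; ring
    · intro a ha hane
      refine Finset.sum_eq_zero fun b hb => ?_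
      rw [hzero a ha b hb (by tauto)]; ring
  rw [houter, mir_br_L_self x0 (hodd x0 hx0S) K (by rw [hx0w]; ring)] at h0
  have : y x0 = 0 := by
    have h2 : (y x0 * y x0) * 2 = 0 := h0
    have := mul_eq_zero.mp h2
    rcases this with h' | h'
    · rcases mul_eq_zero.mp h' with h'' | h'' <;> exact h''
    · exact absurd h' two_ne_zero
  exact (Finsupp.mem_support_iff.mp hx0S) this

/-- The odd NS element `G⁽¹⁾_{1/2} + i G⁽²⁾_{1/2}` squares to zero. -/
lemma ns_square_zero :
    NS.extBr NS.br
      (Finsupp.single (NS.B.G1 0) 1 + Finsupp.single (NS.B.G2 0) Complex.I)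
      (Finsupp.single (NS.B.G1 0) 1 + Finsupp.single (NS.B.G2 0) Complex.I) = 0 := by
  rw [NS.extBr]
  rw [Finsupp.sum_add_index (by simp) (by intros; simp [add_mul, add_smul, Finsupp.sum_add])]
  rw [Finsupp.sum_single_index (by simp), Finsupp.sum_single_index (by simp)]
  rw [Finsupp.sum_add_index (by simp) (by intros; simp [mul_add, add_smul])]
  rw [Finsupp.sum_add_index (by simp) (by intros; simp [mul_add, add_smul])]
  rw [Finsupp.sum_single_index (by simp), Finsupp.sum_single_index (by simp),
    Finsupp.sum_single_index (by simp), Finsupp.sum_single_index (by simp)]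
  simp only [NS.br]
  norm_num

theorem mirror_twisted_not_isomorphic_to_n2_neveu_schwarz :
    ¬ ∃ φ : (NS.B →₀ ℂ) ≃ₗ[ℂ] (Mir.B →₀ ℂ),
      (∀ f g : NS.B →₀ ℂ,
        φ (NS.extBr NS.br f g) = Mir.extBr Mir.br (φ f) (φ g)) ∧
      (∀ f : NS.B →₀ ℂ, (∀ x ∈ f.support, NS.par x = 0) →
        ∀ y ∈ (φ f).support, Mir.par y = 0) ∧
      (∀ f : NS.B →₀ ℂ, (∀ x ∈ f.support, NS.par x = 1) →
        ∀ y ∈ (φ f).support, Mir.par y = 1) := by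
  rintro ⟨φ, hbr, -, hodd⟩
  set x : NS.B →₀ ℂ :=
    Finsupp.single (NS.B.G1 0) 1 + Finsupp.single (NS.B.G2 0) Complex.I with hxdef
  have hxodd : ∀ b ∈ x.support, NS.par b = 1 := by
    intro b hb
    have : b ∈ ({NS.B.G1 0} : Finset NS.B) ∪ {NS.B.G2 0} := by
      refine Finset.mem_of_subset ?_ hb
      refine (Finsupp.support_add).trans ?_
      exact Finset.union_subset_union Finsupp.support_single_subset
        Finsupp.support_single_subset
    simp only [Finset.mem_union, Finset.mem_singleton] at this
    rcases this with h | h <;> subst h <;> rfl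
  have hsq : Mir.extBr Mir.br (φ x) (φ x) = 0 := by
    rw [← hbr, hxdef, ns_square_zero, map_zero]
  have hφxodd : ∀ b ∈ (φ x).support, Mir.par b = 1 := hodd x hxodd
  have hφx0 : φ x = 0 := mir_no_square_zero (φ x) hφxodd hsq
  have hx0 : x = 0 := φ.injective (hφx0.trans (map_zero φ).symm)
  have : x (NS.B.G1 0) = 1 := by
    rw [hxdef]
    simp [Finsupp.single_apply]
  rw [hx0] at this
  simp at this

end Stmt4
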